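/- Let x be a feasible solution to (IP1). For each job j define d_j = 1 + max{t : x_{j,t} = 1} (feasibility of (IP1) forces x_{j,r_j} = 1, so d_j is well defined). Then there exists a schedule, i.e., pairwise disjoint sets A_j ⊆ {0,1,…,T−1} with |A_j| = p_j, such that every a ∈ A_j satisfies r_j ≤ a < d_j. Consequently the total weighted flow-time of this schedule, Σ_j w_j·(1 + max A_j − r_j), is at most the cost Σ_j Σ_{t=r_j}^{T} w_j·x_{j,t} of x. -/

import Mathlib

open Finset

lemma intervalHall {J : Type} [Fintype J] [DecidableEq J] (p a b : J → ℕ)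
    (hab : ∀ j, a j < b j)
    (H : ∀ s t : ℕ, s ≤ t →
      ∑ j ∈ Finset.univ.filter (fun j => s ≤ a j ∧ b j ≤ t), p j ≤ t - s) :
    ∀ K : Finset J, ∑ j ∈ K, p j ≤ (K.biUnion fun j => Finset.Ico (a j) (b j)).card := by
  suffices h : ∀ n : ℕ, ∀ K : Finset J,
      (∀ hK : K.Nonempty, K.sup' hK b - K.inf' hK a ≤ n) →
      ∑ j ∈ K, p j ≤ (K.biUnion fun j => Finset.Ico (a j) (b j)).card by
    intro K
    rcases K.eq_empty_or_nonempty with rfl | hK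
    · simp
    · exact h (K.sup' hK b - K.inf' hK a) K (fun _ => le_rfl)
  intro n
  induction n with
  | zero =>
    intro K hspan
    rcases K.eq_empty_or_nonempty with rfl | hK
    · simp
    · obtain ⟨j, hj⟩ := id hK
      have h1 : K.inf' hK a ≤ a j := inf'_le _ hj
      have h2 : b j ≤ K.sup' hK b := le_sup' _ hj
      have := hspan hK
      have := hab j
      omega
  | succ n ih =>
    intro K hspan
    rcases K.eq_empty_or_nonempty with rfl | hK
    · simp
    set m := K.inf' hK a with hm
    set M := K.sup' hK b with hM
    have hmM : m < M := by
      obtain ⟨j, hj⟩ := id hK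
      have h1 : m ≤ a j := inf'_le _ hj
      have h2 : b j ≤ M := le_sup' _ hj
      have := hab j; omega
    by_cases hcov : Finset.Ico m M ⊆ K.biUnion fun j => Finset.Ico (a j) (b j)
    · calc ∑ j ∈ K, p j
          ≤ ∑ j ∈ Finset.univ.filter (fun j => m ≤ a j ∧ b j ≤ M), p j := by
            apply sum_le_sum_of_subset
            intro j hj
            simp only [mem_filter, mem_univ, true_and]
            exact ⟨inf'_le _ hj, le_sup' _ hj⟩
        _ ≤ M - m := H m M hmM.le
        _ = (Finset.Ico m M).card := (Nat.card_Ico m M).symm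
        _ ≤ _ := card_le_card hcov
    · rw [Finset.subset_iff] at hcov
      push_neg at hcov
      obtain ⟨g, hg, hgU⟩ := hcov
      rw [Finset.mem_Ico] at hg
      set K1 := K.filter (fun j => b j ≤ g) with hK1
      set K2 := K.filter (fun j => g < a j) with hK2
      have hside : ∀ j ∈ K, b j ≤ g ∨ g < a j := by
        intro j hj
        by_contra hcon
        push_neg at hcon
        exact hgU (mem_biUnion.2 ⟨j, hj, mem_Ico.2 ⟨hcon.2, hcon.1⟩⟩)
      have hsplit : K = K1 ∪ K2 := by
        ext j
        simp only [hK1, hK2, mem_union, mem_filter]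
        constructor
        · intro hj; rcases hside j hj with h | h
          · exact Or.inl ⟨hj, h⟩
          · exact Or.inr ⟨hj, h⟩
        · rintro (⟨hj, _⟩ | ⟨hj, _⟩) <;> exact hj
      have hdisj : Disjoint K1 K2 := by
        rw [Finset.disjoint_left]
        intro j h1 h2
        simp only [hK1, hK2, mem_filter] at h1 h2
        have := hab j; omega
      have hUdisj : Disjoint (K1.biUnion fun j => Finset.Ico (a j) (b j))
          (K2.biUnion fun j => Finset.Ico (a j) (b j)) := by
        rw [Finset.disjoint_left]
        intro z h1 h2
        rw [mem_biUnion] at h1 h2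
        obtain ⟨j1, hj1, hz1⟩ := h1
        obtain ⟨j2, hj2, hz2⟩ := h2
        simp only [hK1, hK2, mem_filter] at hj1 hj2
        rw [mem_Ico] at hz1 hz2
        omega
      have hI1 : ∑ j ∈ K1, p j ≤ (K1.biUnion fun j => Finset.Ico (a j) (b j)).card := by
        apply ih
        intro hK1n
        have hs : K1.sup' hK1n b ≤ g := by
          apply sup'_le
          intro j hj
          exact (mem_filter.1 hj).2
        have hi : m ≤ K1.inf' hK1n a := by
          apply le_inf'
          intro j hj
          exact inf'_le _ (mem_filter.1 hj).1
        have := hspan hK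
        omega
      have hI2 : ∑ j ∈ K2, p j ≤ (K2.biUnion fun j => Finset.Ico (a j) (b j)).card := by
        apply ih
        intro hK2n
        have hs : K2.sup' hK2n b ≤ M := by
          apply sup'_le
          intro j hj
          exact le_sup' _ (mem_filter.1 hj).1
        have hi : g + 1 ≤ K2.inf' hK2n a := by
          apply le_inf'
          intro j hj
          exact (mem_filter.1 hj).2
        have := hspan hK
        omega
      calc ∑ j ∈ K, p j = ∑ j ∈ K1, p j + ∑ j ∈ K2, p j := by
            rw [hsplit, sum_union hdisj]
        _ ≤ (K1.biUnion fun j => Finset.Ico (a j) (b j)).card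
            + (K2.biUnion fun j => Finset.Ico (a j) (b j)).card := Nat.add_le_add hI1 hI2
        _ = ((K1.biUnion fun j => Finset.Ico (a j) (b j))
            ∪ (K2.biUnion fun j => Finset.Ico (a j) (b j))).card :=
            (card_union_of_disjoint hUdisj).symm
        _ = (K.biUnion fun j => Finset.Ico (a j) (b j)).card := by
            congr 1
            rw [hsplit]
            ext z
            simp only [mem_union, mem_biUnion]
            constructor
            · rintro (⟨j, hj, hz⟩ | ⟨j, hj, hz⟩)
              · exact ⟨j, Or.inl hj, hz⟩
              · exact ⟨j, Or.inr hj, hz⟩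
            · rintro ⟨j, hj | hj, hz⟩
              · exact Or.inl ⟨j, hj, hz⟩
              · exact Or.inr ⟨j, hj, hz⟩



/-- (IP1) feasibility for the weighted flow-time integer program. -/
def IP1Feasible {J : Type} [Fintype J] (p r : J → ℕ) (T : ℕ) (x : J → ℕ → ℕ) : Prop :=
  (∀ j t, r j ≤ t → t ≤ T → x j t ≤ 1) ∧
  (∀ j t, r j < t → t ≤ T → x j t ≤ x j (t - 1)) ∧
  (∀ s t : ℕ, s ≤ t → t ≤ T →
    (∑ j ∈ Finset.univ.filter fun j => s ≤ r j ∧ r j ≤ t, (p j : ℤ)) - ((t : ℤ) - (s : ℤ))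
      ≤ ∑ j ∈ Finset.univ.filter fun j => s ≤ r j ∧ r j ≤ t, (p j : ℤ) * (x j t : ℤ))

/-- Cost of an (IP1) solution: `∑_j ∑_{t = r_j}^{T} w_j · x_{j,t}`. -/
def IP1Cost {J : Type} [Fintype J] (w : J → ℚ) (r : J → ℕ) (T : ℕ) (x : J → ℕ → ℕ) : ℚ :=
  ∑ j, ∑ t ∈ Finset.Icc (r j) T, w j * (x j t : ℚ)

/-- from a feasible (IP1) solution `x` with deadlines
`d j = 1 + max { t : x j t = 1 }`, one can extract a preemptive schedule
(pairwise disjoint sets `A j ⊆ {0,…,T−1}` of `p j` slots, each in `[r j, d j)`)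
whose total weighted flow-time `∑_j w_j·(1 + max A_j − r_j)` is at most the cost of `x`. -/
theorem stmt2 {J : Type} [Fintype J] [DecidableEq J] (p r : J → ℕ) (w : J → ℚ)
    (hp : ∀ j, 1 ≤ p j) (hw : ∀ j, 0 ≤ w j)
    (T : ℕ) (hT : T = ∑ j, p j) (hrT : ∀ j, r j < T)
    (hbusy : ∀ t : ℕ, 1 ≤ t → t ≤ T →
      t ≤ ∑ j ∈ Finset.univ.filter fun j => r j < t, p j)
    (x : J → ℕ → ℕ) (hx : IP1Feasible p r T x)
    (d : J → ℕ)
    (hd1 : ∀ j, 1 ≤ d j)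
    (hd2 : ∀ j, r j ≤ d j - 1 ∧ d j - 1 ≤ T ∧ x j (d j - 1) = 1)
    (hd3 : ∀ j t, r j ≤ t → t ≤ T → x j t = 1 → t < d j) :
    ∃ A : J → Finset ℕ,
      (∀ j j', j ≠ j' → Disjoint (A j) (A j')) ∧
      (∀ j, A j ⊆ Finset.range T) ∧
      (∀ j, (A j).card = p j) ∧
      (∀ j, ∀ a ∈ A j, r j ≤ a ∧ a < d j) ∧
      (∑ j, w j * (((1 + (A j).sup id) - r j : ℕ) : ℚ)) ≤ IP1Cost w r T x := by
  obtain ⟨hx1, hx2, hx3⟩ := hx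
  have mono : ∀ j u v, r j ≤ u → u ≤ v → v ≤ T → x j v ≤ x j u := by
    intro j u v hru huv hvT
    induction v, huv using Nat.le_induction with
    | base => exact le_rfl
    | succ v hv ih =>
      have h1 : x j (v + 1) ≤ x j v := by
        have h := hx2 j (v + 1) (by omega) hvT
        simpa using h
      exact h1.trans (ih (by omega))
  have hrd : ∀ j, r j < d j := by
    intro j; have := (hd2 j).1; have := hd1 j; omega
  have xone : ∀ j t, r j ≤ t → t ≤ T → (x j t = 1 ↔ t < d j) := by
    intro j t hrt htT
    constructor
    · exact hd3 j t hrt htT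
    · intro hlt
      have h1 : x j (d j - 1) ≤ x j t := mono j t (d j - 1) hrt (by omega) (hd2 j).2.1
      have h2 := (hd2 j).2.2
      have h3 := hx1 j t hrt htT
      omega
  have hab : ∀ j, r j < min (d j) T := fun j => lt_min (hrd j) (hrT j)
  have H : ∀ s t : ℕ, s ≤ t →
      ∑ j ∈ Finset.univ.filter (fun j => s ≤ r j ∧ min (d j) T ≤ t), p j ≤ t - s := by
    intro s t hst
    by_cases htT : T ≤ t
    · have hsub : Finset.univ.filter (fun j => s ≤ r j ∧ min (d j) T ≤ t)
          = Finset.univ.filter (fun j => s ≤ r j) := by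
        ext j
        simp only [mem_filter, mem_univ, true_and]
        exact ⟨fun h => h.1, fun h => ⟨h, le_trans (min_le_right _ _) htT⟩⟩
      rw [hsub]
      by_cases hs : s = 0
      · subst hs
        have : Finset.univ.filter (fun j => 0 ≤ r j) = Finset.univ := by
          apply filter_true_of_mem; intro j _; omega
        rw [this, ← hT]
        omega
      · by_cases hsT : s ≤ T
        · have hb := hbusy s (by omega) hsT
          have hsplit : ∑ j ∈ Finset.univ.filter (fun j => r j < s), p j
              + ∑ j ∈ Finset.univ.filter (fun j => ¬ (r j < s)), p j = ∑ j, p j :=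
            sum_filter_add_sum_filter_not _ _ _
          have heq : Finset.univ.filter (fun j => ¬ (r j < s))
              = Finset.univ.filter (fun j => s ≤ r j) := by
            ext j; simp only [mem_filter, mem_univ, true_and, not_lt]
          rw [heq] at hsplit
          omega
        · have : Finset.univ.filter (fun j => s ≤ r j) = ∅ := by
            apply filter_false_of_mem
            intro j _
            have := hrT j; omega
          simp [this]
    · push_neg at htT
      have hfe : Finset.univ.filter (fun j => s ≤ r j ∧ min (d j) T ≤ t)
          = Finset.univ.filter (fun j => s ≤ r j ∧ d j ≤ t) := by
        ext j
        simp only [mem_filter, mem_univ, true_and]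
        constructor
        · intro h; exact ⟨h.1, by have := h.2; omega⟩
        · intro h; exact ⟨h.1, by have := h.2; omega⟩
      rw [hfe]
      have hc := hx3 s t hst (by omega)
      set F := Finset.univ.filter (fun j => s ≤ r j ∧ r j ≤ t) with hF
      set G := Finset.univ.filter (fun j => s ≤ r j ∧ d j ≤ t) with hG
      have hGF : G ⊆ F := by
        intro j hj
        simp only [hG, hF, mem_filter, mem_univ, true_and] at hj ⊢
        have := hrd j; omega
      have hxz : ∀ j ∈ G, x j t = 0 := by
        intro j hj
        simp only [hG, mem_filter, mem_univ, true_and] at hj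
        have hrt : r j ≤ t := by have := hrd j; omega
        have h1 := hx1 j t hrt (by omega)
        have h2 := (xone j t hrt (by omega))
        by_contra hne
        have hx1' : x j t = 1 := by omega
        have := h2.1 hx1'
        omega
      have key : (∑ j ∈ G, (p j : ℤ)) ≤ (t : ℤ) - s := by
        have e1 : ∑ j ∈ F \ G, ((p j : ℤ) * (x j t : ℤ)) + ∑ j ∈ G, ((p j : ℤ) * (x j t : ℤ))
            = ∑ j ∈ F, ((p j : ℤ) * (x j t : ℤ)) := sum_sdiff hGF
        have e2 : ∑ j ∈ G, ((p j : ℤ) * (x j t : ℤ)) = 0 := by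
          apply sum_eq_zero
          intro j hj
          rw [hxz j hj]; ring
        have e3 : ∑ j ∈ F \ G, ((p j : ℤ) * (x j t : ℤ)) ≤ ∑ j ∈ F \ G, (p j : ℤ) := by
          apply sum_le_sum
          intro j hj
          have hjF := (mem_sdiff.1 hj).1
          simp only [hF, mem_filter, mem_univ, true_and] at hjF
          have hb := hx1 j t (by omega) (by omega)
          have : (x j t : ℤ) ≤ 1 := by exact_mod_cast hb
          nlinarith [Int.natCast_nonneg (p j)]
        have e4 : ∑ j ∈ F \ G, (p j : ℤ) + ∑ j ∈ G, (p j : ℤ) = ∑ j ∈ F, (p j : ℤ) :=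
          sum_sdiff hGF
        omega
      have hcast : ((∑ j ∈ G, p j : ℕ) : ℤ) = ∑ j ∈ G, (p j : ℤ) := by push_cast; rfl
      omega
  -- Hall's theorem on job copies
  have hallCond : ∀ S : Finset ((j : J) × Fin (p j)),
      S.card ≤ (S.biUnion fun i => Finset.Ico (r i.1) (min (d i.1) T)).card := by
    intro S
    set K := S.image Sigma.fst with hK
    have h1 : S.card ≤ ∑ j ∈ K, p j := by
      have hsub : S ⊆ K.sigma (fun j => (Finset.univ : Finset (Fin (p j)))) := by
        intro i hi
        rw [mem_sigma]
        exact ⟨mem_image_of_mem _ hi, mem_univ _⟩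
      calc S.card ≤ _ := card_le_card hsub
        _ = ∑ j ∈ K, p j := by rw [card_sigma]; simp
    have h2 : S.biUnion (fun i => Finset.Ico (r i.1) (min (d i.1) T))
        = K.biUnion (fun j => Finset.Ico (r j) (min (d j) T)) := by
      ext z
      simp only [mem_biUnion, hK, mem_image]
      constructor
      · rintro ⟨i, hi, hz⟩; exact ⟨i.1, ⟨i, hi, rfl⟩, hz⟩
      · rintro ⟨j, ⟨i, hi, rfl⟩, hz⟩; exact ⟨i, hi, hz⟩
    rw [h2]
    exact h1.trans (intervalHall p r (fun j => min (d j) T) hab H K)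
  obtain ⟨f, hfinj, hf⟩ :=
    (Finset.all_card_le_biUnion_card_iff_existsInjective'
      (fun i : (j : J) × Fin (p j) => Finset.Ico (r i.1) (min (d i.1) T))).1 hallCond
  set A : J → Finset ℕ := fun j => (Finset.univ : Finset (Fin (p j))).image (fun k => f ⟨j, k⟩)
    with hA
  have hmem : ∀ j, ∀ a ∈ A j, r j ≤ a ∧ a < min (d j) T := by
    intro j a ha
    simp only [hA, mem_image, mem_univ, true_and] at ha
    obtain ⟨k, rfl⟩ := ha
    have := hf ⟨j, k⟩
    rw [Finset.mem_Ico] at this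
    exact this
  refine ⟨A, ?_, ?_, ?_, ?_, ?_⟩
  · intro j j' hne
    rw [Finset.disjoint_left]
    intro a haj haj'
    simp only [hA, mem_image, mem_univ, true_and] at haj haj'
    obtain ⟨k, hk⟩ := haj
    obtain ⟨k', hk'⟩ := haj'
    have : (⟨j, k⟩ : (j : J) × Fin (p j)) = ⟨j', k'⟩ := hfinj (by rw [hk, hk'])
    exact hne (congrArg Sigma.fst this)
  · intro j a ha
    rw [Finset.mem_range]
    have := (hmem j a ha).2
    omega
  · intro j
    rw [hA]
    rw [Finset.card_image_of_injective]
    · simp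
    · intro k1 k2 hk
      have : (⟨j, k1⟩ : (j : J) × Fin (p j)) = ⟨j, k2⟩ := hfinj hk
      exact (Sigma.mk.inj_iff.1 this).2.eq
  · intro j a ha
    have := hmem j a ha
    exact ⟨this.1, by omega⟩
  · have hsum : ∀ j, (d j - r j : ℕ) ≤ ∑ t ∈ Finset.Icc (r j) T, x j t := by
      intro j
      have hsub : Finset.Icc (r j) (d j - 1) ⊆ Finset.Icc (r j) T :=
        Finset.Icc_subset_Icc le_rfl (hd2 j).2.1
      calc (d j - r j : ℕ) = (Finset.Icc (r j) (d j - 1)).card := by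
            rw [Nat.card_Icc]; have := hrd j; have := hd1 j; omega
        _ = ∑ t ∈ Finset.Icc (r j) (d j - 1), 1 := by simp
        _ ≤ ∑ t ∈ Finset.Icc (r j) (d j - 1), x j t := by
            apply sum_le_sum
            intro t ht
            rw [Finset.mem_Icc] at ht
            have h1 := (xone j t ht.1 (le_trans ht.2 (hd2 j).2.1)).2 (by have := hd1 j; omega)
            omega
        _ ≤ ∑ t ∈ Finset.Icc (r j) T, x j t := sum_le_sum_of_subset hsub
    rw [IP1Cost]
    apply Finset.sum_le_sum
    intro j _
    have hsup : (A j).sup id ≤ d j - 1 := by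
      apply Finset.sup_le
      intro a ha
      have := (hmem j a ha).2
      simp only [id]
      omega
    have h1 : ((1 + (A j).sup id) - r j : ℕ) ≤ d j - r j := by
      have := hd1 j; omega
    calc w j * (((1 + (A j).sup id) - r j : ℕ) : ℚ)
        ≤ w j * ((d j - r j : ℕ) : ℚ) :=
          mul_le_mul_of_nonneg_left (by exact_mod_cast h1) (hw j)
      _ ≤ w j * ((∑ t ∈ Finset.Icc (r j) T, x j t : ℕ) : ℚ) :=
          mul_le_mul_of_nonneg_left (by exact_mod_cast hsum j) (hw j)
      _ = ∑ t ∈ Finset.Icc (r j) T, w j * (x j t : ℚ) := by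
          rw [Nat.cast_sum, mul_sum]
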